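/- arXiv:1312.6076 — 3 statements merged into one kernel-verified Lean document; each statement's English description precedes it below -/
import Mathlib

section
/- (Stroock–Varopoulos inequality, bilinear-form formulation.) Let d ≥ 1, s ∈ (0,1) and q > 1. For every nonnegative measurable function v : ℝ^d → ℝ one has ∬_{ℝ^d×ℝ^d} (v(x)-v(y))(v(x)^{q-1}-v(y)^{q-1}) |x-y|^{-(d+2s)} dx dy ≥ (4(q-1)/q²) ∬_{ℝ^d×ℝ^d} (v(x)^{q/2}-v(y)^{q/2})² |x-y|^{-(d+2s)} dx dy, where both double integrals have nonnegative integrands and take values in [0,∞]. (This expresses the inequality ∫ v^{q-1} (-Δ)^s(v) dx ≥ (4(q-1)/q²) ∥(-Δ)^{s/2}(v^{q/2})∥_{L²}² through the Gagliardo bilinear form representation of the fractional Laplacian.) -/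
open MeasureTheory Filter Topology Set
open scoped ENNReal NNReal

noncomputable section

/-- `d`-dimensional Euclidean space. -/
abbrev Ed (d : ℕ) : Type := EuclideanSpace ℝ (Fin d)

/-- An admissible weight with exponents `(γ₀, γ)` and constants `0 < c < C`:
a measurable, everywhere positive function comparable to `|x|^{-γ₀}` near the
origin and to `|x|^{-γ}` at infinity. -/
def AdmissibleWeight (d : ℕ) (ρ : Ed d → ℝ) (γ₀ γ c C : ℝ) : Prop :=
  0 < c ∧ c < C ∧ Measurable ρ ∧ (∀ x, 0 < ρ x) ∧
    (∀ᵐ x ∂(volume : Measure (Ed d)), ‖x‖ ≤ 1 →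
      c * ‖x‖ ^ (-γ₀) ≤ ρ x ∧ ρ x ≤ C * ‖x‖ ^ (-γ₀)) ∧
    (∀ᵐ x ∂(volume : Measure (Ed d)), 1 < ‖x‖ →
      c * ‖x‖ ^ (-γ) ≤ ρ x ∧ ρ x ≤ C * ‖x‖ ^ (-γ))

/-- The Gagliardo bilinear form `E(v,w)` of order `s` with normalizing constant `κ`. -/
def gagliardoE (d : ℕ) (s κ : ℝ) (v w : Ed d → ℝ) : ℝ :=
  (κ / 2) * ∫ p : Ed d × Ed d,
    (v p.1 - v p.2) * (w p.1 - w p.2) / ‖p.1 - p.2‖ ^ ((d : ℝ) + 2 * s)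

/-- The squared homogeneous fractional Sobolev seminorm `‖v‖_{Ḣ^s}² = E(v,v)`,
with values in `[0,∞]`. -/
def gagliardoSq (d : ℕ) (s κ : ℝ) (v : Ed d → ℝ) : ℝ≥0∞ :=
  ENNReal.ofReal (κ / 2) * ∫⁻ p : Ed d × Ed d,
    ENNReal.ofReal ((v p.1 - v p.2) ^ 2 / ‖p.1 - p.2‖ ^ ((d : ℝ) + 2 * s))

/-- The weighted `L^p` norm `‖v‖_{p,ρ}`, valued in `[0,∞]`. -/
def wnorm (d : ℕ) (p : ℝ) (ρ v : Ed d → ℝ) : ℝ≥0∞ :=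
  (∫⁻ x : Ed d, ENNReal.ofReal (|v x| ^ p * ρ x)) ^ (1 / p)

/-- Smooth compactly supported test functions on `ℝ^d × (0,∞)`. -/
def IsTestFn (d : ℕ) (φ : Ed d × ℝ → ℝ) : Prop :=
  ContDiff ℝ (⊤ : ℕ∞) φ ∧ HasCompactSupport φ ∧ tsupport φ ⊆ univ ×ˢ Ioi (0 : ℝ)

/-- Conditions (i)–(iii) of the definition of weak solution of
`ρ u_t + (-Δ)^s(u^m) = 0` on `ℝ^d × (0,∞)` (no initial datum prescribed). -/
structure WeakSolCore (d : ℕ) (s m κ : ℝ) (ρ : Ed d → ℝ) (u : Ed d → ℝ → ℝ) : Prop where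
  measurable : Measurable (Function.uncurry u)
  nonneg : ∀ x t, 0 ≤ u x t
  /-- (i), first part: `ess sup_{t>0} ∫ u(·,t) ρ < ∞`. -/
  massBound : ∃ M : ℝ, ∀ᵐ t ∂(volume.restrict (Ioi (0 : ℝ))),
    Integrable (fun x : Ed d => u x t * ρ x) ∧ (∫ x : Ed d, u x t * ρ x) ≤ M
  /-- (i), second part: `u` essentially bounded on `ℝ^d × (τ,∞)` for every `τ > 0`. -/
  essBdd : ∀ τ : ℝ, 0 < τ → ∃ B : ℝ,
    ∀ᵐ p ∂(volume : Measure (Ed d × ℝ)), τ < p.2 → u p.1 p.2 ≤ B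
  /-- (ii), first part: `‖u^m(·,t)‖_{Ḣ^s} < ∞` for a.e. `t > 0`. -/
  energyFinite : ∀ᵐ t ∂(volume.restrict (Ioi (0 : ℝ))),
    gagliardoSq d s κ (fun x => u x t ^ m) < ⊤
  /-- (ii), second part: `t ↦ ‖u^m(·,t)‖_{Ḣ^s}²` locally integrable on `(0,∞)`. -/
  energyLocInt : ∀ t₁ t₂ : ℝ, 0 < t₁ → t₁ < t₂ →
    (∫⁻ t in Ioc t₁ t₂, gagliardoSq d s κ (fun x => u x t ^ m)) ≠ ⊤
  /-- (iii): the weak formulation against all test functions. -/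
  weakForm : ∀ φ : Ed d × ℝ → ℝ, IsTestFn d φ →
    -(∫ t in Ioi (0 : ℝ), ∫ x : Ed d, u x t * deriv (fun τ => φ (x, τ)) t * ρ x)
      + ∫ t in Ioi (0 : ℝ),
          gagliardoE d s κ (fun x => u x t ^ m) (fun x => φ (x, t)) = 0

/-- Condition (iv): `ρ(·)u(·,t) → μ` as `t → 0` essentially, tested against all
bounded continuous functions. -/
def HasInitialTrace (d : ℕ) (ρ : Ed d → ℝ) (u : Ed d → ℝ → ℝ)
    (μ : Measure (Ed d)) : Prop :=
  ∃ N : Set ℝ, volume N = 0 ∧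
    ∀ φ : Ed d → ℝ, Continuous φ → (∃ B : ℝ, ∀ x, |φ x| ≤ B) →
      Tendsto (fun t => ∫ x : Ed d, φ x * (u x t * ρ x))
        (𝓝[(Ioi (0 : ℝ)) \ N] 0) (𝓝 (∫ x, φ x ∂μ))

/-- Weak solution of the Cauchy problem with initial datum `μ`. -/
def IsWeakSolution (d : ℕ) (s m κ : ℝ) (ρ : Ed d → ℝ) (μ : Measure (Ed d))
    (u : Ed d → ℝ → ℝ) : Prop :=
  WeakSolCore d s m κ ρ u ∧ HasInitialTrace d ρ u μ

lemma key_le (q : ℝ) (hq : 1 < q) {a b : ℝ} (hb : 0 ≤ b) (hba : b ≤ a) :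
    4 * (q - 1) / q ^ 2 * (a ^ (q / 2) - b ^ (q / 2)) ^ 2 ≤
      (a - b) * (a ^ (q - 1) - b ^ (q - 1)) := by
  have hq0 : (0:ℝ) < q := by linarith
  have ha : 0 ≤ a := hb.trans hba
  set μ := (volume : Measure ℝ).restrict (Ioc b a) with hμ
  have hfin : IsFiniteMeasure μ := ⟨by simp [hμ, Real.volume_Ioc]⟩
  have hpos : ∀ t ∈ Ioc b a, 0 < t ∨ 0 ≤ b := fun t ht => Or.inr hb
  have h22 : (2:ℝ).HolderConjugate 2 := ⟨by norm_num, by norm_num, by norm_num⟩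
  -- integrability of t ^ (q-2) on Ioc b a
  have hint2 : IntegrableOn (fun t : ℝ => t ^ (q - 2)) (Ioc b a) volume := by
    have := intervalIntegral.intervalIntegrable_rpow' (a := b) (b := a)
      (r := q - 2) (by linarith)
    exact (intervalIntegrable_iff_integrableOn_Ioc_of_le hba).mp this
  have hint1 : IntegrableOn (fun t : ℝ => t ^ (q / 2 - 1)) (Ioc b a) volume := by
    have := intervalIntegral.intervalIntegrable_rpow' (a := b) (b := a)
      (r := q / 2 - 1) (by linarith)
    exact (intervalIntegrable_iff_integrableOn_Ioc_of_le hba).mp this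
  have hmeas : AEStronglyMeasurable (fun t : ℝ => t ^ (q / 2 - 1)) μ :=
    hint1.aestronglyMeasurable
  have hsq : (fun t : ℝ => (t ^ (q / 2 - 1)) ^ (2:ℕ)) =ᵐ[μ] fun t => t ^ (q - 2) := by
    filter_upwards [ae_restrict_mem measurableSet_Ioc] with t ht
    have ht0 : 0 ≤ t := le_of_lt (lt_of_le_of_lt hb ht.1)
    rw [← Real.rpow_natCast (t ^ (q / 2 - 1)) 2, ← Real.rpow_mul ht0]
    norm_num; ring_nf
  have hf2 : MemLp (fun t : ℝ => t ^ (q / 2 - 1)) (ENNReal.ofReal 2) μ := by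
    rw [show ENNReal.ofReal 2 = 2 by norm_num]
    refine (memLp_two_iff_integrable_sq hmeas).mpr ?_
    exact hint2.congr hsq.symm
  have hg2 : MemLp (fun _ : ℝ => (1:ℝ)) (ENNReal.ofReal 2) μ := memLp_const 1
  have hH := integral_mul_le_Lp_mul_Lq_of_nonneg (μ := μ) h22
    (f := fun t : ℝ => t ^ (q / 2 - 1)) (g := fun _ => (1:ℝ))
    (by filter_upwards [ae_restrict_mem measurableSet_Ioc] with t ht;
        exact Real.rpow_nonneg (le_of_lt (lt_of_le_of_lt hb ht.1)) _)
    (Filter.Eventually.of_forall fun _ => zero_le_one) hf2 hg2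
  -- compute the three integrals
  have hμuniv : μ univ = ENNReal.ofReal (a - b) := by
    simp [hμ, Real.volume_Ioc]
  set S := a ^ (q / 2) - b ^ (q / 2) with hS
  set T := a ^ (q - 1) - b ^ (q - 1) with hT
  have hS0 : 0 ≤ S := sub_nonneg.mpr (Real.rpow_le_rpow hb hba (by linarith))
  have hT0 : 0 ≤ T := sub_nonneg.mpr (Real.rpow_le_rpow hb hba (by linarith))
  have eA : ∫ t, t ^ (q / 2 - 1) ∂μ = S / (q / 2) := by
    rw [hμ, ← intervalIntegral.integral_of_le hba,
      integral_rpow (Or.inl (by linarith))]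
    rw [show q / 2 - 1 + 1 = q / 2 by ring]
  have eB : ∫ t, t ^ (q - 2) ∂μ = T / (q - 1) := by
    rw [hμ, ← intervalIntegral.integral_of_le hba,
      integral_rpow (Or.inl (by linarith))]
    rw [show q - 2 + 1 = q - 1 by ring]
  have eC : ∫ _t, (1:ℝ) ∂μ = a - b := by
    rw [integral_const, measureReal_def, hμuniv, smul_eq_mul, mul_one,
      ENNReal.toReal_ofReal (by linarith)]
  -- rewrite Hölder's inequality
  have hsq' : (fun t : ℝ => (t ^ (q / 2 - 1)) ^ (2:ℝ)) =ᵐ[μ] fun t => t ^ (q - 2) := by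
    filter_upwards [hsq] with t ht
    rw [← ht, ← Real.rpow_natCast (t ^ (q / 2 - 1)) 2]; norm_num
  have hH' : S / (q / 2) ≤ (T / (q - 1)) ^ ((1:ℝ)/2) * (a - b) ^ ((1:ℝ)/2) := by
    calc S / (q / 2) = ∫ t, t ^ (q / 2 - 1) * 1 ∂μ := by
          simp only [mul_one]; rw [eA]
      _ ≤ (∫ t, (t ^ (q / 2 - 1)) ^ (2:ℝ) ∂μ) ^ ((1:ℝ)/2) *
            (∫ _t, (1:ℝ) ^ (2:ℝ) ∂μ) ^ ((1:ℝ)/2) := hH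
      _ = (T / (q - 1)) ^ ((1:ℝ)/2) * (a - b) ^ ((1:ℝ)/2) := by
          rw [integral_congr_ae hsq', eB]
          congr 2
          · simp only [Real.one_rpow]; exact eC
  have hab0 : (0:ℝ) ≤ a - b := by linarith
  have hBT : 0 ≤ T / (q - 1) := div_nonneg hT0 (by linarith)
  have hsqr : ((T / (q - 1)) ^ ((1:ℝ)/2) * (a - b) ^ ((1:ℝ)/2)) *
      ((T / (q - 1)) ^ ((1:ℝ)/2) * (a - b) ^ ((1:ℝ)/2)) = (T / (q - 1)) * (a - b) := by
    have h1 : (T / (q - 1)) ^ ((1:ℝ)/2) * (T / (q - 1)) ^ ((1:ℝ)/2) = T / (q - 1) := by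
      rw [← Real.rpow_add' hBT (by norm_num)]; norm_num
    have h2 : (a - b) ^ ((1:ℝ)/2) * (a - b) ^ ((1:ℝ)/2) = a - b := by
      rw [← Real.rpow_add' hab0 (by norm_num)]; norm_num
    calc ((T / (q - 1)) ^ ((1:ℝ)/2) * (a - b) ^ ((1:ℝ)/2)) *
        ((T / (q - 1)) ^ ((1:ℝ)/2) * (a - b) ^ ((1:ℝ)/2))
        = ((T / (q - 1)) ^ ((1:ℝ)/2) * (T / (q - 1)) ^ ((1:ℝ)/2)) *
          ((a - b) ^ ((1:ℝ)/2) * (a - b) ^ ((1:ℝ)/2)) := by ring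
      _ = (T / (q - 1)) * (a - b) := by rw [h1, h2]
  have hA0 : 0 ≤ S / (q / 2) := div_nonneg hS0 (by linarith)
  have hmain : (S / (q / 2)) * (S / (q / 2)) ≤ (T / (q - 1)) * (a - b) := by
    rw [← hsqr]; exact mul_self_le_mul_self hA0 hH'
  have hq2 : (0:ℝ) < q ^ 2 := by positivity
  have hA2 : (S / (q / 2)) * (S / (q / 2)) = 4 * S ^ 2 / q ^ 2 := by
    field_simp; ring
  rw [hA2] at hmain
  calc 4 * (q - 1) / q ^ 2 * S ^ 2 = (q - 1) * (4 * S ^ 2 / q ^ 2) := by ring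
    _ ≤ (q - 1) * ((T / (q - 1)) * (a - b)) :=
        mul_le_mul_of_nonneg_left hmain (by linarith)
    _ = (T / (q - 1) * (q - 1)) * (a - b) := by ring
    _ = T * (a - b) := by rw [div_mul_cancel₀ _ (show q - 1 ≠ 0 by linarith)]
    _ = (a - b) * T := mul_comm _ _


lemma key_le' (q : ℝ) (hq : 1 < q) {a b : ℝ} (ha : 0 ≤ a) (hb : 0 ≤ b) :
    4 * (q - 1) / q ^ 2 * (a ^ (q / 2) - b ^ (q / 2)) ^ 2 ≤
      (a - b) * (a ^ (q - 1) - b ^ (q - 1)) := by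
  rcases le_total b a with h | h
  · exact key_le q hq hb h
  · have := key_le q hq ha h
    calc 4 * (q - 1) / q ^ 2 * (a ^ (q / 2) - b ^ (q / 2)) ^ 2
        = 4 * (q - 1) / q ^ 2 * (b ^ (q / 2) - a ^ (q / 2)) ^ 2 := by ring
      _ ≤ (b - a) * (b ^ (q - 1) - a ^ (q - 1)) := this
      _ = (a - b) * (a ^ (q - 1) - b ^ (q - 1)) := by ring

/-- **Stroock–Varopoulos inequality** (bilinear form formulation). For every
nonnegative measurable `v : ℝ^d → ℝ` and every `q > 1`,
`∬ (v(x)-v(y))(v(x)^{q-1}-v(y)^{q-1}) |x-y|^{-(d+2s)}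
  ≥ (4(q-1)/q²) ∬ (v(x)^{q/2}-v(y)^{q/2})² |x-y|^{-(d+2s)}`,
both sides being integrals of nonnegative integrands valued in `[0,∞]`. -/
theorem stroock_varopoulos
    (d : ℕ) (hd : 0 < d) (s q : ℝ) (hs0 : 0 < s) (hs1 : s < 1) (hq : 1 < q)
    (v : Ed d → ℝ) (hv : ∀ x, 0 ≤ v x) (hvm : Measurable v) :
    ENNReal.ofReal (4 * (q - 1) / q ^ 2) *
      ∫⁻ p : Ed d × Ed d, ENNReal.ofReal
        ((v p.1 ^ (q / 2) - v p.2 ^ (q / 2)) ^ 2 / ‖p.1 - p.2‖ ^ ((d : ℝ) + 2 * s))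
      ≤ ∫⁻ p : Ed d × Ed d, ENNReal.ofReal
        ((v p.1 - v p.2) * (v p.1 ^ (q - 1) - v p.2 ^ (q - 1)) /
          ‖p.1 - p.2‖ ^ ((d : ℝ) + 2 * s)) := by
  rw [← lintegral_const_mul' _ _ ENNReal.ofReal_ne_top]
  refine lintegral_mono fun p => ?_
  set K := ‖p.1 - p.2‖ ^ ((d : ℝ) + 2 * s) with hK
  have hK0 : 0 ≤ K := Real.rpow_nonneg (norm_nonneg _) _
  have hC0 : 0 ≤ 4 * (q - 1) / q ^ 2 := div_nonneg (by linarith) (by positivity)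
  rw [← ENNReal.ofReal_mul hC0]
  refine ENNReal.ofReal_le_ofReal ?_
  rw [mul_div_assoc']
  rcases eq_or_lt_of_le hK0 with h0 | h0
  · rw [← h0, div_zero, div_zero]
  · exact (div_le_div_iff_of_pos_right h0).mpr (key_le' q hq (hv p.1) (hv p.2))
end
end

section
/- Let d be a positive integer and s ∈ (0,1) with d > 2s. Let μ₊ and μ₋ be finite nonnegative Borel measures on ℝ^d such that for Lebesgue-a.e. x ∈ ℝ^d, ∫_{ℝ^d} |x-y|^{2s-d} dμ₋(y) ≤ ∫_{ℝ^d} |x-y|^{2s-d} dμ₊(y) (both integrals taken with values in [0,∞]). Then μ₋(ℝ^d) ≤ μ₊(ℝ^d). (Equivalently: a finite signed Radon measure ν on ℝ^d whose Riesz potential U^ν = I_{2s} * ν is nonnegative almost everywhere satisfies ν(ℝ^d) ≥ 0.) -/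
open MeasureTheory Filter Topology Set
open scoped ENNReal NNReal

noncomputable section

section RieszAux

open Metric

lemma Ed.nontrivial {d : ℕ} (hd : 0 < d) : Nontrivial (Ed d) := by
  have : Nonempty (Fin d) := ⟨⟨0, hd⟩⟩
  infer_instance

/-- translation invariance -/
lemma riesz_translate {d : ℕ} (p : ℝ) (y : Ed d) (r : ℝ) :
    ∫⁻ x in ball y r, (ENNReal.ofReal ‖x - y‖) ^ p ∂(volume : Measure (Ed d))
      = ∫⁻ x in ball (0 : Ed d) r, (ENNReal.ofReal ‖x‖) ^ p ∂volume := by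
  have hmp : MeasurePreserving (· + y) (volume : Measure (Ed d)) volume :=
    measurePreserving_add_right volume y
  have := hmp.setLIntegral_comp_preimage_emb (measurableEmbedding_addRight y)
    (fun x => (ENNReal.ofReal ‖x - y‖) ^ p) (ball y r)
  rw [← this]
  have hpre : ((· + y) ⁻¹' ball y r : Set (Ed d)) = ball (0 : Ed d) r := by
    ext x
    simp [mem_ball, dist_eq_norm]
  rw [hpre]
  simp

/-- scaling -/
lemma riesz_scale {d : ℕ} (hd : 0 < d) (p : ℝ) {r : ℝ} (hr : 0 < r) :
    ∫⁻ x in ball (0 : Ed d) r, (ENNReal.ofReal ‖x‖) ^ p ∂(volume : Measure (Ed d))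
      = (ENNReal.ofReal r) ^ (p + d) *
        ∫⁻ x in ball (0 : Ed d) 1, (ENNReal.ofReal ‖x‖) ^ p ∂volume := by
  haveI := Ed.nontrivial hd
  have hf : Measurable (fun x : Ed d => (ENNReal.ofReal ‖x‖) ^ p) := by fun_prop
  have hmap := Measure.map_addHaar_smul (volume : Measure (Ed d)) (ne_of_gt hr)
  have hd' : Module.finrank ℝ (Ed d) = d := finrank_euclideanSpace_fin
  rw [hd'] at hmap
  -- compute the set integral w.r.t. the mapped measure in two ways
  have key : ∫⁻ x in ball (0 : Ed d) r, (ENNReal.ofReal ‖x‖) ^ p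
        ∂(Measure.map (r • ·) (volume : Measure (Ed d)))
      = (ENNReal.ofReal r) ^ p *
        ∫⁻ x in ball (0 : Ed d) 1, (ENNReal.ofReal ‖x‖) ^ p ∂volume := by
    rw [setLIntegral_map measurableSet_ball hf (measurable_const_smul r)]
    have hpre : ((r • ·) ⁻¹' ball (0 : Ed d) r : Set (Ed d)) = ball (0 : Ed d) 1 := by
      ext x
      simp only [mem_preimage, mem_ball, dist_zero_right, norm_smul, Real.norm_eq_abs,
        abs_of_pos hr]
      constructor
      · intro hx; nlinarith [norm_nonneg x]
      · intro hx; nlinarith [norm_nonneg x]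
    rw [hpre, ← lintegral_const_mul _ hf]
    refine setLIntegral_congr_fun measurableSet_ball (fun x _ => ?_)
    rw [norm_smul, Real.norm_eq_abs, abs_of_pos hr, ENNReal.ofReal_mul hr.le,
      ENNReal.mul_rpow_of_ne_top ENNReal.ofReal_ne_top ENNReal.ofReal_ne_top]
  rw [hmap] at key
  rw [Measure.restrict_smul, lintegral_smul_measure] at key
  have hrd : (0:ℝ) < r ^ d := pow_pos hr d
  have habs : ENNReal.ofReal |(r ^ d)⁻¹| = (ENNReal.ofReal (r ^ d))⁻¹ := by
    rw [abs_of_pos (inv_pos.2 hrd), ENNReal.ofReal_inv_of_pos hrd]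
  rw [habs] at key
  have h1 : ENNReal.ofReal (r ^ d) ≠ 0 := by simp [hrd]
  have h2 : ENNReal.ofReal (r ^ d) ≠ ⊤ := ENNReal.ofReal_ne_top
  have := congrArg (fun z => ENNReal.ofReal (r ^ d) * z) key
  simp only at this
  rw [smul_eq_mul, ← mul_assoc, ENNReal.mul_inv_cancel h1 h2, one_mul] at this
  rw [this, ← mul_assoc]
  congr 1
  rw [ENNReal.ofReal_pow hr.le, ← ENNReal.rpow_natCast (ENNReal.ofReal r) d,
    ← ENNReal.rpow_add _ _ (by simp [hr]) ENNReal.ofReal_ne_top]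
  ring_nf

lemma ennrpow_anti {a b : ℝ≥0∞} {p : ℝ} (hab : a ≤ b) (hp : p ≤ 0) : b ^ p ≤ a ^ p := by
  have : b ^ (-(-p)) ≤ a ^ (-(-p)) := by
    rw [ENNReal.rpow_neg b, ENNReal.rpow_neg a]
    exact ENNReal.inv_le_inv.2 (ENNReal.rpow_le_rpow hab (by linarith))
  simpa using this

lemma swap_aux {d : ℕ} (p : ℝ) (μ : Measure (Ed d)) [SFinite μ] (R : ℝ) :
    ∫⁻ x in ball (0 : Ed d) R, (∫⁻ y, (ENNReal.ofReal ‖x - y‖) ^ p ∂μ) ∂volume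
      = ∫⁻ y, (∫⁻ x in ball (0 : Ed d) R, (ENNReal.ofReal ‖x - y‖) ^ p ∂volume) ∂μ := by
  apply lintegral_lintegral_swap
  have : Measurable (fun z : Ed d × Ed d => (ENNReal.ofReal ‖z.1 - z.2‖) ^ p) := by fun_prop
  exact this.aemeasurable

lemma riesz_finite {d : ℕ} (hd : 0 < d) {p : ℝ} (hp : -(d : ℝ) < p) (hp0 : p < 0) :
    ∫⁻ x in ball (0 : Ed d) 1, (ENNReal.ofReal ‖x‖) ^ p ∂(volume : Measure (Ed d)) < ⊤ := by
  haveI : Nonempty (Fin d) := ⟨⟨0, hd⟩⟩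
  haveI : Nontrivial (Ed d) := inferInstance
  set f : Ed d → ℝ≥0∞ := fun x => (ENNReal.ofReal ‖x‖) ^ p with hf
  set q : ℝ := 2⁻¹ with hq
  have hq0 : (0:ℝ) < q := by norm_num [hq]
  have hq1 : q < 1 := by norm_num [hq]
  set S : ℕ → Set (Ed d) := fun n => closedBall (0 : Ed d) (q ^ n) \ closedBall 0 (q ^ (n + 1))
    with hS
  -- covering
  have hcover : ball (0 : Ed d) 1 ⊆ {0} ∪ ⋃ n, S n := by
    intro z hz
    rcases eq_or_ne z 0 with rfl | hz0
    · exact Or.inl rfl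
    right
    have hz1 : ‖z‖ < 1 := mem_ball_zero_iff.1 hz
    have hzpos : 0 < ‖z‖ := norm_pos_iff.2 hz0
    have hex : ∃ n, q ^ n < ‖z‖ := exists_pow_lt_of_lt_one hzpos hq1
    set N := Nat.find hex with hN
    have hNspec : q ^ N < ‖z‖ := Nat.find_spec hex
    have hNpos : N ≠ 0 := by
      intro h0
      rw [h0] at hNspec
      simp at hNspec
      linarith
    set m := N - 1 with hmdef
    have hm : ¬ (q ^ m < ‖z‖) := Nat.find_min hex (by omega)
    push_neg at hm
    have hNm : N = m + 1 := by omega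
    rw [hNm] at hNspec
    refine mem_iUnion.2 ⟨m, ?_⟩
    constructor
    · exact mem_closedBall_zero_iff.2 hm
    · intro hc
      exact absurd (mem_closedBall_zero_iff.1 hc) (not_le.2 hNspec)
  -- the ENNReal geometric ratio
  set a : ℝ≥0∞ := ENNReal.ofReal q with ha
  have ha0 : a ≠ 0 := by simp [ha, hq0]
  have hatop : a ≠ ⊤ := ENNReal.ofReal_ne_top
  set v : ℝ≥0∞ := volume (ball (0 : Ed d) 1) with hv
  have hvtop : v ≠ ⊤ := measure_ball_lt_top.ne
  -- bound on each shell
  have hshell : ∀ n : ℕ, (∫⁻ x in S n, f x ∂volume) ≤ (v * a ^ p) * (a ^ (p + d)) ^ n := by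
    intro n
    have hSmeas : MeasurableSet (S n) := measurableSet_closedBall.diff measurableSet_closedBall
    have hbound : ∀ x ∈ S n, f x ≤ (a ^ (n+1) : ℝ≥0∞) ^ p := by
      intro x hx
      have hx1 : q ^ (n+1) < ‖x‖ := not_le.1 fun hc => hx.2 (mem_closedBall_zero_iff.2 hc)
      have : (a ^ (n+1) : ℝ≥0∞) ≤ ENNReal.ofReal ‖x‖ := by
        rw [ha, ← ENNReal.ofReal_pow hq0.le]
        exact ENNReal.ofReal_le_ofReal hx1.le
      calc f x = ((ENNReal.ofReal ‖x‖)⁻¹) ^ (-p) := by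
            rw [← ENNReal.rpow_neg_one, ← ENNReal.rpow_mul]; ring_nf; rfl
        _ ≤ ((a ^ (n+1) : ℝ≥0∞)⁻¹) ^ (-p) :=
            ENNReal.rpow_le_rpow (ENNReal.inv_le_inv.2 this) (by linarith)
        _ = (a ^ (n+1) : ℝ≥0∞) ^ p := by
            rw [← ENNReal.rpow_neg_one, ← ENNReal.rpow_mul]; ring_nf
    calc (∫⁻ x in S n, f x ∂volume)
        ≤ ∫⁻ _ in S n, (a ^ (n+1) : ℝ≥0∞) ^ p ∂volume := setLIntegral_mono' hSmeas hbound
      _ = (a ^ (n+1) : ℝ≥0∞) ^ p * volume (S n) := setLIntegral_const _ _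
      _ ≤ (a ^ (n+1) : ℝ≥0∞) ^ p * (a ^ (n * d) * v) := by
          gcongr
          have : volume (S n) ≤ volume (closedBall (0 : Ed d) (q ^ n)) :=
            measure_mono diff_subset
          rw [Measure.addHaar_closedBall _ _ (pow_nonneg hq0.le n),
            finrank_euclideanSpace_fin] at this
          refine this.trans (le_of_eq ?_)
          rw [ha, ← pow_mul, ← ENNReal.ofReal_pow hq0.le]
      _ = (v * a ^ p) * (a ^ (p + d)) ^ n := by
          rw [← ENNReal.rpow_natCast a (n+1), ← ENNReal.rpow_natCast a (n*d),
            ← ENNReal.rpow_mul]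
          calc a ^ ((↑(n + 1):ℝ) * p) * (a ^ ((↑(n * d):ℝ)) * v)
              = v * a ^ ((↑(n+1):ℝ)*p + (↑(n*d):ℝ)) := by
                rw [ENNReal.rpow_add _ _ ha0 hatop]; ring
            _ = v * (a ^ p * a ^ ((p + (d:ℝ)) * (n:ℝ))) := by
                rw [← ENNReal.rpow_add _ _ ha0 hatop]; congr 1; push_cast; ring
            _ = (v * a ^ p) * (a ^ (p + (d:ℝ))) ^ n := by
                rw [ENNReal.rpow_mul, ENNReal.rpow_natCast, mul_assoc]
  -- sum up
  have hsum : (∫⁻ x in ball (0 : Ed d) 1, f x ∂volume)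
      ≤ 0 + ∑' n, (v * a ^ p) * (a ^ (p + d)) ^ n := by
    calc (∫⁻ x in ball (0 : Ed d) 1, f x ∂volume)
        ≤ ∫⁻ x in ({0} ∪ ⋃ n, S n : Set (Ed d)), f x ∂volume := lintegral_mono_set hcover
      _ ≤ (∫⁻ x in ({0} : Set (Ed d)), f x ∂volume) + ∫⁻ x in (⋃ n, S n), f x ∂volume :=
          lintegral_union_le _ _ _
      _ ≤ 0 + ∑' n, (v * a ^ p) * (a ^ (p + d)) ^ n := by
          gcongr
          · rw [setLIntegral_measure_zero _ _ (measure_singleton 0)]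
          · exact (lintegral_iUnion_le _ _).trans (ENNReal.tsum_le_tsum hshell)
  rw [zero_add, ENNReal.tsum_mul_left, ENNReal.tsum_geometric] at hsum
  refine hsum.trans_lt ?_
  have hap : a ^ p ≠ ⊤ := by
    rw [ha, ENNReal.ofReal_rpow_of_pos hq0]; exact ENNReal.ofReal_ne_top
  have hlt1 : a ^ (p + (d:ℝ)) < 1 := by
    apply ENNReal.rpow_lt_one (by rw [ha]; exact ENNReal.ofReal_lt_one.2 hq1) (by linarith)
  have : (1 - a ^ (p + (d:ℝ)))⁻¹ < ⊤ := by
    rw [ENNReal.inv_lt_top]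
    exact tsub_pos_iff_lt.2 hlt1
  exact ENNReal.mul_lt_top (ENNReal.mul_lt_top hvtop.lt_top hap.lt_top) this

section
variable {d : ℕ} {p : ℝ}

-- upper bound on F R y, pointwise
lemma F_upper (hd : 0 < d) (hp0 : p < 0) {A R : ℝ} (hA : 1 ≤ A) (hR : A + 1 ≤ R)
    (y : Ed d) :
    (∫⁻ x in ball (0 : Ed d) R, (ENNReal.ofReal ‖x - y‖) ^ p ∂volume)
      ≤ (∫⁻ x in ball y R, (ENNReal.ofReal ‖x - y‖) ^ p ∂volume)
        + (ENNReal.ofReal R) ^ p *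
          ((volume (ball (0 : Ed d) R) - volume (ball (0 : Ed d) (R - A)))
            + volume (ball (0 : Ed d) R) * ({y : Ed d | A < ‖y‖}).indicator 1 y) := by
  have hR0 : (0:ℝ) < R := by linarith
  set K : Ed d → ℝ≥0∞ := fun x => (ENNReal.ofReal ‖x - y‖) ^ p with hK
  have hdecomp : (∫⁻ x in ball (0 : Ed d) R, K x ∂volume)
      = (∫⁻ x in ball (0 : Ed d) R ∩ ball y R, K x ∂volume)
        + ∫⁻ x in ball (0 : Ed d) R \ ball y R, K x ∂volume := by
    rw [← lintegral_union (measurableSet_ball.diff measurableSet_ball)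
      (Set.disjoint_sdiff_right.mono_left inter_subset_right), inter_union_diff]
  rw [hdecomp]
  gcongr
  · exact inter_subset_right
  · -- tail term
    have hbound : ∀ x ∈ ball (0 : Ed d) R \ ball y R, K x ≤ (ENNReal.ofReal R) ^ p := by
      intro x hx
      have hxy : R ≤ ‖x - y‖ := by
        have := hx.2
        rw [mem_ball, dist_eq_norm] at this
        linarith [not_lt.1 this]
      exact ennrpow_anti (ENNReal.ofReal_le_ofReal hxy) hp0.le
    calc (∫⁻ x in ball (0 : Ed d) R \ ball y R, K x ∂volume)
        ≤ ∫⁻ _ in ball (0 : Ed d) R \ ball y R, (ENNReal.ofReal R) ^ p ∂volume :=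
          setLIntegral_mono' (measurableSet_ball.diff measurableSet_ball) hbound
      _ = (ENNReal.ofReal R) ^ p * volume (ball (0 : Ed d) R \ ball y R) :=
          setLIntegral_const _ _
      _ ≤ _ := by
          gcongr
          by_cases hyA : ‖y‖ ≤ A
          · -- diff set contained in annulus
            have hsub : ball (0 : Ed d) (R - A) ⊆ ball y R := by
              intro z hz
              rw [mem_ball_zero_iff] at hz
              rw [mem_ball, dist_eq_norm]
              calc ‖z - y‖ ≤ ‖z‖ + ‖y‖ := norm_sub_le _ _
                _ < R - A + A := by linarith
                _ = R := by ring
            have h1 : ball (0 : Ed d) R \ ball y R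
                ⊆ ball (0 : Ed d) R \ ball (0 : Ed d) (R - A) :=
              diff_subset_diff_right hsub
            have h2 : volume (ball (0 : Ed d) R \ ball (0 : Ed d) (R - A))
                = volume (ball (0 : Ed d) R) - volume (ball (0 : Ed d) (R - A)) :=
              measure_diff (ball_subset_ball (by linarith))
                measurableSet_ball.nullMeasurableSet measure_ball_lt_top.ne
            calc volume (ball (0 : Ed d) R \ ball y R)
                ≤ volume (ball (0 : Ed d) R \ ball (0 : Ed d) (R - A)) := measure_mono h1
              _ = volume (ball (0 : Ed d) R) - volume (ball (0 : Ed d) (R - A)) := h2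
              _ ≤ _ := le_self_add
          · -- y far away: use trivial bound, indicator is 1
            have hyA' : A < ‖y‖ := not_le.1 hyA
            have : ({y : Ed d | A < ‖y‖}).indicator (1 : Ed d → ℝ≥0∞) y = 1 :=
              Set.indicator_of_mem hyA' 1
            rw [this, mul_one]
            calc volume (ball (0 : Ed d) R \ ball y R)
                ≤ volume (ball (0 : Ed d) R) := measure_mono diff_subset
              _ ≤ _ := le_add_self

end

lemma master {d : ℕ} {p : ℝ} (hd : 0 < d) (hp0 : p < 0) (hpd : -(d:ℝ) < p)
    (μp μm : Measure (Ed d)) [IsFiniteMeasure μp] [IsFiniteMeasure μm]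
    (h : ∀ᵐ x ∂(volume : Measure (Ed d)),
      (∫⁻ y, (ENNReal.ofReal ‖x - y‖) ^ p ∂μm)
        ≤ ∫⁻ y, (ENNReal.ofReal ‖x - y‖) ^ p ∂μp)
    {A R : ℝ} (hA : 1 ≤ A) (hR : A + 1 ≤ R) :
    ENNReal.ofReal (((R - A) / R) ^ (p + (d:ℝ)))
        * ((∫⁻ x in ball (0 : Ed d) 1, (ENNReal.ofReal ‖x‖) ^ p ∂volume) * μm (ball 0 A))
      ≤ (∫⁻ x in ball (0 : Ed d) 1, (ENNReal.ofReal ‖x‖) ^ p ∂volume) * μp univ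
        + ENNReal.ofReal (1 - ((R - A) / R) ^ d)
            * (volume (ball (0 : Ed d) 1) * μp univ)
        + volume (ball (0 : Ed d) 1) * μp {y : Ed d | A < ‖y‖} := by
  haveI : Nonempty (Fin d) := ⟨⟨0, hd⟩⟩
  haveI : Nontrivial (Ed d) := inferInstance
  have hR0 : (0:ℝ) < R := by linarith
  have hr0 : (0:ℝ) < R - A := by linarith
  set c : ℝ≥0∞ := ∫⁻ x in ball (0 : Ed d) 1, (ENNReal.ofReal ‖x‖) ^ p ∂volume with hc
  set v : ℝ≥0∞ := volume (ball (0 : Ed d) 1) with hv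
  have hvtop : v ≠ ⊤ := measure_ball_lt_top.ne
  set F : Ed d → ℝ≥0∞ :=
    fun y => ∫⁻ x in ball (0 : Ed d) R, (ENNReal.ofReal ‖x - y‖) ^ p ∂volume with hF
  -- Step A: compare the integrals of F against μm and μp (Fubini)
  have hfub : (∫⁻ y, F y ∂μm) ≤ ∫⁻ y, F y ∂μp := by
    rw [hF, ← swap_aux p μm R, ← swap_aux p μp R]
    exact lintegral_mono_ae (ae_restrict_of_ae h)
  -- Step B: lower bound
  have hlow : ENNReal.ofReal (R - A) ^ (p + (d:ℝ)) * c * μm (ball 0 A)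
      ≤ ∫⁻ y, F y ∂μm := by
    have hsub : ∀ y ∈ ball (0 : Ed d) A,
        ENNReal.ofReal (R - A) ^ (p + (d:ℝ)) * c ≤ F y := by
      intro y hy
      have h1 : ball y (R - A) ⊆ ball (0 : Ed d) R := by
        intro x hx
        rw [mem_ball, dist_eq_norm] at hx
        rw [mem_ball_zero_iff]
        have hyA := mem_ball_zero_iff.1 hy
        calc ‖x‖ = ‖(x - y) + y‖ := by rw [sub_add_cancel]
          _ ≤ ‖x - y‖ + ‖y‖ := norm_add_le _ _
          _ < (R - A) + A := by linarith
          _ = R := by ring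
      calc ENNReal.ofReal (R - A) ^ (p + (d:ℝ)) * c
          = ∫⁻ x in ball y (R - A), (ENNReal.ofReal ‖x - y‖) ^ p ∂volume := by
            rw [riesz_translate, riesz_scale hd p hr0]
        _ ≤ F y := lintegral_mono_set h1
    calc ENNReal.ofReal (R - A) ^ (p + (d:ℝ)) * c * μm (ball 0 A)
        = ∫⁻ _ in ball (0 : Ed d) A, ENNReal.ofReal (R - A) ^ (p + (d:ℝ)) * c ∂μm :=
          (setLIntegral_const _ _).symm
      _ ≤ ∫⁻ y in ball (0 : Ed d) A, F y ∂μm := setLIntegral_mono' measurableSet_ball hsub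
      _ ≤ ∫⁻ y, F y ∂μm := setLIntegral_le_lintegral _ _
  -- Step C: upper bound
  set S : Set (Ed d) := {y : Ed d | A < ‖y‖} with hS
  have hSmeas : MeasurableSet S := measurableSet_lt measurable_const measurable_norm
  set vR : ℝ≥0∞ := volume (ball (0 : Ed d) R) with hvR
  set vr : ℝ≥0∞ := volume (ball (0 : Ed d) (R - A)) with hvr
  have hup : (∫⁻ y, F y ∂μp)
      ≤ ENNReal.ofReal R ^ (p + (d:ℝ)) * c * μp univ
        + ENNReal.ofReal R ^ p * ((vR - vr) * μp univ + vR * μp S) := by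
    have hpt : ∀ y, F y ≤ ENNReal.ofReal R ^ (p + (d:ℝ)) * c
        + ENNReal.ofReal R ^ p * ((vR - vr) + vR * S.indicator 1 y) := by
      intro y
      have := F_upper hd hp0 hA hR y
      rw [riesz_translate, riesz_scale hd p hR0] at this
      exact this
    calc (∫⁻ y, F y ∂μp)
        ≤ ∫⁻ y, (ENNReal.ofReal R ^ (p + (d:ℝ)) * c
            + ENNReal.ofReal R ^ p * ((vR - vr) + vR * S.indicator 1 y)) ∂μp :=
          lintegral_mono hpt
      _ = ENNReal.ofReal R ^ (p + (d:ℝ)) * c * μp univ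
          + ENNReal.ofReal R ^ p * ((vR - vr) * μp univ + vR * μp S) := by
        rw [lintegral_add_left measurable_const, lintegral_const]
        congr 1
        have hWmeas : Measurable (fun y : Ed d => (vR - vr) + vR * S.indicator 1 y) := by
          apply Measurable.add measurable_const
          exact (measurable_one.indicator hSmeas).const_mul vR
        rw [lintegral_const_mul _ hWmeas]
        congr 1
        rw [lintegral_add_left measurable_const, lintegral_const,
          lintegral_const_mul _ (measurable_one.indicator hSmeas),
          lintegral_indicator_one hSmeas]
  have hmain := (hlow.trans hfub).trans hup
  -- Step D: renormalize by dividing by (ofReal R) ^ (p + d)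
  have hRp : (0:ℝ) < R ^ (p + (d:ℝ)) := Real.rpow_pos_of_pos hR0 _
  have hRd : (0:ℝ) < R ^ d := pow_pos hR0 d
  set β : ℝ≥0∞ := ENNReal.ofReal ((R ^ (p + (d:ℝ)))⁻¹) with hβ
  have hprod : ∀ x : ℝ, ENNReal.ofReal x * β = ENNReal.ofReal (x * (R ^ (p + (d:ℝ)))⁻¹) := by
    intro x; rw [hβ, ← ENNReal.ofReal_mul' (inv_nonneg.2 hRp.le)]
  have e1 : ENNReal.ofReal (R - A) ^ (p + (d:ℝ)) = ENNReal.ofReal ((R-A) ^ (p + (d:ℝ))) :=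
    ENNReal.ofReal_rpow_of_pos hr0
  have e2 : ENNReal.ofReal R ^ (p + (d:ℝ)) = ENNReal.ofReal (R ^ (p + (d:ℝ))) :=
    ENNReal.ofReal_rpow_of_pos hR0
  have e3 : ENNReal.ofReal R ^ p = ENNReal.ofReal (R ^ p) := ENNReal.ofReal_rpow_of_pos hR0
  rw [e1, e2, e3] at hmain
  have hstep := mul_le_mul_left hmain β
  have hone : ENNReal.ofReal (R ^ (p + (d:ℝ))) * β = 1 := by
    rw [hprod, mul_inv_cancel₀ hRp.ne', ENNReal.ofReal_one]
  have eqL : ENNReal.ofReal ((R-A) ^ (p + (d:ℝ))) * c * μm (ball 0 A) * β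
      = ENNReal.ofReal (((R - A) / R) ^ (p + (d:ℝ))) * (c * μm (ball 0 A)) := by
    calc ENNReal.ofReal ((R-A) ^ (p + (d:ℝ))) * c * μm (ball 0 A) * β
        = (ENNReal.ofReal ((R-A) ^ (p + (d:ℝ))) * β) * (c * μm (ball 0 A)) := by ring
      _ = ENNReal.ofReal (((R - A) / R) ^ (p + (d:ℝ))) * (c * μm (ball 0 A)) := by
          rw [hprod]
          congr 2
          rw [Real.div_rpow hr0.le hR0.le, div_eq_mul_inv]
  set w : ℝ≥0∞ := ENNReal.ofReal ((R ^ d : ℝ)⁻¹) with hw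
  have hw3 : ENNReal.ofReal (R ^ p) * β = w := by
    rw [hprod, hw]
    congr 1
    rw [← Real.rpow_natCast R d, ← Real.rpow_neg hR0.le, ← Real.rpow_neg hR0.le,
      ← Real.rpow_add hR0]
    ring_nf
  have evR : vR = ENNReal.ofReal (R ^ d) * v := by
    rw [hvR, hv, Measure.addHaar_ball _ _ hR0.le, finrank_euclideanSpace_fin]
  have evr : vr = ENNReal.ofReal ((R - A) ^ d) * v := by
    rw [hvr, hv, Measure.addHaar_ball _ _ hr0.le, finrank_euclideanSpace_fin]
  have hwvR : w * vR = v := by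
    rw [evR, hw, ← mul_assoc, ← ENNReal.ofReal_mul (inv_nonneg.2 hRd.le),
      inv_mul_cancel₀ hRd.ne', ENNReal.ofReal_one, one_mul]
  have hwdiff : w * (vR - vr) = (1 - ENNReal.ofReal (((R - A)/R) ^ d)) * v := by
    rw [evR, evr, ← ENNReal.sub_mul (fun _ _ => hvtop), ← mul_assoc,
      ENNReal.mul_sub (fun _ _ => ENNReal.ofReal_ne_top),
      ← ENNReal.ofReal_mul (inv_nonneg.2 hRd.le), ← ENNReal.ofReal_mul (inv_nonneg.2 hRd.le),
      inv_mul_cancel₀ hRd.ne', ENNReal.ofReal_one]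
    congr 3
    rw [div_pow]
    field_simp
  have eqR : (ENNReal.ofReal (R ^ (p + (d:ℝ))) * c * μp univ
        + ENNReal.ofReal (R ^ p) * ((vR - vr) * μp univ + vR * μp S)) * β
      = c * μp univ + ENNReal.ofReal (1 - ((R - A) / R) ^ d) * (v * μp univ)
        + v * μp S := by
    have hofs : ENNReal.ofReal (1 - ((R - A) / R) ^ d)
        = 1 - ENNReal.ofReal (((R - A)/R) ^ d) := by
      rw [ENNReal.ofReal_sub _ (by positivity), ENNReal.ofReal_one]
    calc (ENNReal.ofReal (R ^ (p + (d:ℝ))) * c * μp univ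
          + ENNReal.ofReal (R ^ p) * ((vR - vr) * μp univ + vR * μp S)) * β
        = (ENNReal.ofReal (R ^ (p + (d:ℝ))) * β) * (c * μp univ)
          + (ENNReal.ofReal (R ^ p) * β) * ((vR - vr) * μp univ + vR * μp S) := by ring
      _ = c * μp univ + (w * (vR - vr)) * μp univ + (w * vR) * μp S := by
          rw [hone, one_mul, hw3, mul_add]; ring
      _ = c * μp univ + ENNReal.ofReal (1 - ((R - A) / R) ^ d) * (v * μp univ)
          + v * μp S := by
          rw [hwvR, hwdiff, hofs]; ring
  rw [eqL, eqR] at hstep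
  exact hstep

end RieszAux

open Metric in
/-- If the Riesz potential (of order `2s`) of the finite nonnegative measure
`μ₋` is a.e. dominated by that of the finite nonnegative measure `μ₊`, then
`μ₋(ℝ^d) ≤ μ₊(ℝ^d)`.  Equivalently, a finite signed Radon measure whose Riesz
potential is a.e. nonnegative has nonnegative total mass. -/
theorem mass_le_of_riesz_potential_le
    (d : ℕ) (s : ℝ) (hs0 : 0 < s) (hs1 : s < 1) (hd : 2 * s < (d : ℝ))
    (μp μm : Measure (Ed d)) (hμp : IsFiniteMeasure μp) (hμm : IsFiniteMeasure μm)
    (h : ∀ᵐ x ∂(volume : Measure (Ed d)),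
      (∫⁻ y, (ENNReal.ofReal ‖x - y‖) ^ (2 * s - (d : ℝ)) ∂μm)
        ≤ ∫⁻ y, (ENNReal.ofReal ‖x - y‖) ^ (2 * s - (d : ℝ)) ∂μp) :
    μm univ ≤ μp univ := by
  haveI := hμp; haveI := hμm
  set p : ℝ := 2 * s - (d : ℝ) with hpdef
  have hdR : (0:ℝ) < d := by linarith
  have hd0 : 0 < d := by exact_mod_cast hdR
  have hp0 : p < 0 := by rw [hpdef]; linarith
  have hpd : -(d:ℝ) < p := by rw [hpdef]; linarith
  set c : ℝ≥0∞ := ∫⁻ x in ball (0 : Ed d) 1, (ENNReal.ofReal ‖x‖) ^ p ∂volume with hc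
  set v : ℝ≥0∞ := volume (ball (0 : Ed d) 1) with hv
  have hvtop : v ≠ ⊤ := measure_ball_lt_top.ne
  have hctop : c ≠ ⊤ := (riesz_finite hd0 hpd hp0).ne
  have hc0 : c ≠ 0 := by
    have hlow : ∀ x ∈ ball (0 : Ed d) 1, (1:ℝ≥0∞) ≤ (ENNReal.ofReal ‖x‖) ^ p := by
      intro x hx
      have hx1 : ENNReal.ofReal ‖x‖ ≤ 1 := by
        rw [← ENNReal.ofReal_one]
        exact ENNReal.ofReal_le_ofReal (mem_ball_zero_iff.1 hx).le
      have := ENNReal.rpow_le_rpow_of_exponent_ge hx1 hp0.le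
      rw [ENNReal.rpow_zero] at this
      exact this
    have : v ≤ c := by
      calc v = ∫⁻ _ in ball (0 : Ed d) 1, (1:ℝ≥0∞) ∂volume := by
            rw [setLIntegral_const, one_mul, hv]
        _ ≤ c := setLIntegral_mono' measurableSet_ball hlow
    intro hcz
    rw [hcz, le_zero_iff] at this
    exact (measure_ball_pos volume (0 : Ed d) one_pos).ne' this
  -- ratio sequence
  set ρ : ℕ → ℝ := fun n => (((n:ℝ)^2 - (n:ℝ)) / (n:ℝ)^2) with hρdef
  have hρ : Tendsto ρ atTop (𝓝 1) := by
    have hev : ∀ᶠ n : ℕ in atTop, 1 - (n:ℝ)⁻¹ = ρ n := by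
      filter_upwards [eventually_ge_atTop 1] with n hn
      have hn0 : (n:ℝ) ≠ 0 := by positivity
      rw [hρdef]
      field_simp
    have : Tendsto (fun n : ℕ => 1 - (n:ℝ)⁻¹) atTop (𝓝 (1 - 0)) :=
      tendsto_const_nhds.sub tendsto_inv_atTop_nhds_zero_nat
    rw [sub_zero] at this
    exact Tendsto.congr' hev this
  -- master inequality at A = n, R = n^2
  have hmaster : ∀ n : ℕ, 2 ≤ n →
      ENNReal.ofReal ((ρ n) ^ (p + (d:ℝ))) * (c * μm (ball 0 (n:ℝ)))
        ≤ c * μp univ + ENNReal.ofReal (1 - (ρ n) ^ d) * (v * μp univ)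
          + v * μp {y : Ed d | (n:ℝ) < ‖y‖} := by
    intro n hn
    have hA : (1:ℝ) ≤ (n:ℝ) := by exact_mod_cast Nat.one_le_of_lt hn
    have h2 : (2:ℝ) ≤ (n:ℝ) := by exact_mod_cast hn
    have hR : (n:ℝ) + 1 ≤ (n:ℝ)^2 := by nlinarith
    have := master hd0 hp0 hpd μp μm h hA hR
    exact this
  -- limits
  have hLlim : Tendsto (fun n : ℕ =>
      ENNReal.ofReal ((ρ n) ^ (p + (d:ℝ))) * (c * μm (ball 0 (n:ℝ)))) atTop
      (𝓝 (c * μm univ)) := by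
    have h1 : Tendsto (fun n : ℕ => ENNReal.ofReal ((ρ n) ^ (p + (d:ℝ)))) atTop (𝓝 1) := by
      have hreal : Tendsto (fun n : ℕ => (ρ n) ^ (p + (d:ℝ))) atTop (𝓝 1) := by
        have := hρ.rpow (tendsto_const_nhds : Tendsto (fun _ : ℕ => p + (d:ℝ)) atTop _)
          (Or.inl one_ne_zero)
        simpa [Real.one_rpow] using this
      have := ENNReal.tendsto_ofReal hreal
      simpa using this
    have h2 : Tendsto (fun n : ℕ => c * μm (ball 0 (n:ℝ))) atTop (𝓝 (c * μm univ)) := by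
      apply ENNReal.Tendsto.const_mul _ (Or.inr hctop)
      have hmono : Monotone (fun n : ℕ => ball (0 : Ed d) (n:ℝ)) := by
        intro a b hab
        exact ball_subset_ball (by exact_mod_cast hab)
      have := tendsto_measure_iUnion_atTop (μ := μm) hmono
      rwa [iUnion_ball_nat] at this
    have := ENNReal.Tendsto.mul h1 (Or.inl one_ne_zero) h2 (Or.inr ENNReal.one_ne_top)
    simpa using this
  have hUlim : Tendsto (fun n : ℕ =>
      c * μp univ + ENNReal.ofReal (1 - (ρ n) ^ d) * (v * μp univ)
        + v * μp {y : Ed d | (n:ℝ) < ‖y‖}) atTop (𝓝 (c * μp univ)) := by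
    have t2 : Tendsto (fun n : ℕ => ENNReal.ofReal (1 - (ρ n) ^ d) * (v * μp univ)) atTop
        (𝓝 0) := by
      have hreal : Tendsto (fun n : ℕ => 1 - (ρ n) ^ d) atTop (𝓝 0) := by
        have : Tendsto (fun n : ℕ => 1 - (ρ n) ^ d) atTop (𝓝 (1 - 1 ^ d)) :=
          (tendsto_const_nhds : Tendsto (fun _ : ℕ => (1:ℝ)) atTop _).sub (hρ.pow d)
        simpa using this
      have h0 : Tendsto (fun n : ℕ => ENNReal.ofReal (1 - (ρ n) ^ d)) atTop (𝓝 0) := by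
        have := ENNReal.tendsto_ofReal hreal
        simpa using this
      have := ENNReal.Tendsto.mul_const h0
        (Or.inr (ENNReal.mul_ne_top hvtop (measure_ne_top μp univ)))
      simpa using this
    have t3 : Tendsto (fun n : ℕ => v * μp {y : Ed d | (n:ℝ) < ‖y‖}) atTop (𝓝 0) := by
      have hmeas : Tendsto (fun n : ℕ => μp {y : Ed d | (n:ℝ) < ‖y‖}) atTop (𝓝 0) := by
        have hanti : Antitone (fun n : ℕ => {y : Ed d | (n:ℝ) < ‖y‖}) := by
          intro a b hab y hy
          simp only [mem_setOf_eq] at hy ⊢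
          have : (a:ℝ) ≤ (b:ℝ) := by exact_mod_cast hab
          linarith
        have hempty : (⋂ n : ℕ, {y : Ed d | (n:ℝ) < ‖y‖}) = ∅ := by
          ext y
          simp only [mem_iInter, mem_setOf_eq, mem_empty_iff_false, iff_false, not_forall,
            not_lt]
          obtain ⟨n, hn⟩ := exists_nat_ge ‖y‖
          exact ⟨n, hn⟩
        have := tendsto_measure_iInter_atTop (μ := μp)
          (fun n => (measurableSet_lt measurable_const measurable_norm).nullMeasurableSet)
          hanti ⟨0, measure_ne_top μp _⟩
        rwa [hempty, measure_empty] at this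
      have := ENNReal.Tendsto.const_mul hmeas (Or.inr hvtop)
      simpa using this
    have tconst : Tendsto (fun _ : ℕ => c * μp univ) atTop (𝓝 (c * μp univ)) :=
      tendsto_const_nhds
    have := (tconst.add t2).add t3
    simpa using this
  have hfin : c * μm univ ≤ c * μp univ :=
    le_of_tendsto_of_tendsto hLlim hUlim ((eventually_ge_atTop 2).mono hmaster)
  exact (ENNReal.mul_le_mul_iff_right hc0 hctop).1 hfin
end
end

section
/- Let d be a positive integer and s ∈ (0,1) with d > 2s. Let φ : ℝ^d → ℝ be continuous, Lebesgue integrable, and such that |φ(x)| ≤ A |x|^{-d} for all |x| ≥ 1 and some A > 0. Then the Riesz potential (I_{2s} * φ)(x) := k ∫_{ℝ^d} |x-y|^{2s-d} φ(y) dy is well-defined (the integral converges absolutely for every x), is continuous on ℝ^d, and there exists B > 0 such that |(I_{2s} * φ)(x)| ≤ B |x|^{-(d-2s)} for all |x| ≥ 1, i.e. it decays at least like |x|^{-d+2s} at infinity. -/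
open MeasureTheory Filter Topology Set
open scoped ENNReal NNReal

set_option maxHeartbeats 2000000
noncomputable section

namespace RieszAux

lemma integrable_g1 {d : ℕ} (hd : 0 < d) {a : ℝ} (ha : -(d:ℝ) < a) (ha0 : a < 0) :
    Integrable ((Metric.ball (0:Ed d) 1).indicator fun z : Ed d => ‖z‖ ^ a) := by
  haveI : Nonempty (Fin d) := ⟨⟨0, hd⟩⟩
  have hane : a ≠ 0 := ha0.ne
  set f : Ed d → ℝ := (Metric.ball (0:Ed d) 1).indicator (fun z => ‖z‖ ^ a) with hf
  have hmeas : Measurable f :=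
    (measurable_norm.pow measurable_const).indicator measurableSet_ball
  have hnn : ∀ z, 0 ≤ f z := fun z =>
    indicator_nonneg (fun z _ => Real.rpow_nonneg (norm_nonneg z) a) z
  refine ⟨hmeas.aestronglyMeasurable, ?_⟩
  rw [hasFiniteIntegral_iff_norm]
  have hrw : ∀ z, ENNReal.ofReal ‖f z‖ = ENNReal.ofReal (f z) := fun z => by
    rw [Real.norm_eq_abs, abs_of_nonneg (hnn z)]
  simp_rw [hrw]
  rw [lintegral_eq_lintegral_meas_le volume (Eventually.of_forall hnn) hmeas.aemeasurable]
  set mB := volume (Metric.ball (0:Ed d) 1) with hmB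
  have hmB_lt : mB < ∞ := measure_ball_lt_top
  have hsub : ∀ t : ℝ, 0 < t → volume {z : Ed d | t ≤ f z} ≤
      ENNReal.ofReal (min 1 (t ^ a⁻¹) ^ d) * mB := by
    intro t ht
    have hsub' : {z : Ed d | t ≤ f z} ⊆ Metric.closedBall 0 (min 1 (t ^ a⁻¹)) := by
      intro z hz
      simp only [mem_setOf_eq] at hz
      by_cases hzb : z ∈ Metric.ball (0:Ed d) 1
      · rw [hf, indicator_of_mem hzb] at hz
        have hz0 : ‖z‖ ≠ 0 := by
          intro h0
          rw [h0, Real.zero_rpow hane] at hz; linarith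
        have h1 : ‖z‖ ≤ t ^ a⁻¹ := by
          have h2 := Real.rpow_le_rpow_of_nonpos ht hz (inv_nonpos.mpr ha0.le)
          rwa [Real.rpow_rpow_inv (norm_nonneg z) hane] at h2
        have h2 : ‖z‖ ≤ 1 := (mem_ball_zero_iff.mp hzb).le
        exact mem_closedBall_zero_iff.mpr (le_min h2 h1)
      · rw [hf, indicator_of_notMem hzb] at hz; linarith
    calc volume {z : Ed d | t ≤ f z}
        ≤ volume (Metric.closedBall (0 : Ed d) (min 1 (t ^ a⁻¹))) := measure_mono hsub'
      _ = ENNReal.ofReal (min 1 (t ^ a⁻¹) ^ Module.finrank ℝ (Ed d)) * mB :=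
          (volume : Measure (Ed d)).addHaar_closedBall 0
            (le_min zero_le_one (Real.rpow_nonneg ht.le _))
      _ = ENNReal.ofReal (min 1 (t ^ a⁻¹) ^ d) * mB := by rw [finrank_euclideanSpace_fin]
  calc ∫⁻ t in Ioi 0, volume {z : Ed d | t ≤ f z}
      ≤ ∫⁻ t in Ioc 0 1 ∪ Ioi 1, volume {z : Ed d | t ≤ f z} :=
        lintegral_mono_set Ioi_subset_Ioc_union_Ioi
    _ ≤ (∫⁻ t in Ioc 0 1, volume {z : Ed d | t ≤ f z})
        + ∫⁻ t in Ioi 1, volume {z : Ed d | t ≤ f z} := lintegral_union_le _ _ _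
    _ < ∞ := ENNReal.add_lt_top.2 ⟨?_, ?_⟩
  · have hb : ∀ t ∈ Ioc (0:ℝ) 1, volume {z : Ed d | t ≤ f z} ≤ mB := by
      intro t ht
      refine (hsub t ht.1).trans ?_
      have h1 : ENNReal.ofReal (min 1 (t ^ a⁻¹) ^ d) ≤ 1 := by
        rw [← ENNReal.ofReal_one]
        refine ENNReal.ofReal_le_ofReal ?_
        refine pow_le_one₀ (le_min zero_le_one (Real.rpow_nonneg ht.1.le _)) (min_le_left _ _)
      calc ENNReal.ofReal (min 1 (t ^ a⁻¹) ^ d) * mB ≤ 1 * mB := by gcongr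
        _ = mB := one_mul _
    calc ∫⁻ t in Ioc 0 1, volume {z : Ed d | t ≤ f z}
        ≤ ∫⁻ _ in Ioc (0:ℝ) 1, mB := setLIntegral_mono' measurableSet_Ioc hb
      _ = mB * volume (Ioc (0:ℝ) 1) := setLIntegral_const _ _
      _ < ∞ := by
          refine ENNReal.mul_lt_top hmB_lt ?_
          simp [Real.volume_Ioc]
  · have hexp : (d:ℝ) * a⁻¹ < -1 := by
      have hainv : a⁻¹ < 0 := inv_neg''.mpr ha0
      have h1 : (d:ℝ) * a⁻¹ + 1 = ((d:ℝ) + a) * a⁻¹ := by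
        field_simp
      have h2 : ((d:ℝ) + a) * a⁻¹ < 0 := mul_neg_of_pos_of_neg (by linarith) hainv
      linarith
    have hb : ∀ t ∈ Ioi (1:ℝ), volume {z : Ed d | t ≤ f z} ≤
        ENNReal.ofReal (t ^ ((d:ℝ) * a⁻¹)) * mB := by
      intro t ht
      have ht0 : (0:ℝ) < t := lt_trans one_pos ht
      refine (hsub t ht0).trans ?_
      have h1 : min 1 (t ^ a⁻¹) ^ d ≤ t ^ ((d:ℝ) * a⁻¹) := by
        have h2 : min 1 (t ^ a⁻¹) ^ d ≤ (t ^ a⁻¹) ^ d :=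
          pow_le_pow_left₀ (le_min zero_le_one (Real.rpow_nonneg ht0.le _)) (min_le_right _ _) d
        calc min 1 (t ^ a⁻¹) ^ d ≤ (t ^ a⁻¹) ^ d := h2
          _ = (t ^ a⁻¹) ^ (d:ℝ) := (Real.rpow_natCast _ d).symm
          _ = t ^ (a⁻¹ * d) := (Real.rpow_mul ht0.le _ _).symm
          _ = t ^ ((d:ℝ) * a⁻¹) := by rw [mul_comm]
      gcongr
    calc ∫⁻ t in Ioi 1, volume {z : Ed d | t ≤ f z}
        ≤ ∫⁻ t in Ioi 1, ENNReal.ofReal (t ^ ((d:ℝ) * a⁻¹)) * mB :=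
          setLIntegral_mono' measurableSet_Ioi hb
      _ = (∫⁻ t in Ioi 1, ENNReal.ofReal (t ^ ((d:ℝ) * a⁻¹))) * mB :=
          lintegral_mul_const' mB _ hmB_lt.ne
      _ < ∞ := ENNReal.mul_lt_top
          ((integrableOn_Ioi_rpow_of_lt hexp one_pos).setLIntegral_lt_top) hmB_lt



variable {d : ℕ} {a : ℝ}

/-- Scaled kernel cut off to a ball. -/
def gker (d : ℕ) (a r : ℝ) : Ed d → ℝ :=
  (Metric.ball (0:Ed d) r).indicator fun z : Ed d => ‖z‖ ^ a

lemma gker_nonneg (r : ℝ) (z : Ed d) : 0 ≤ gker d a r z :=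
  indicator_nonneg (fun z _ => Real.rpow_nonneg (norm_nonneg z) a) z

lemma gker_scale {r : ℝ} (hr : 0 < r) (z : Ed d) :
    gker d a r z = r ^ a * gker d a 1 (r⁻¹ • z) := by
  have hmem : r⁻¹ • z ∈ Metric.ball (0:Ed d) 1 ↔ z ∈ Metric.ball (0:Ed d) r := by
    simp only [mem_ball_zero_iff, norm_smul, norm_inv, Real.norm_eq_abs,
      abs_of_pos hr]
    rw [inv_mul_lt_iff₀ hr, mul_one]
  by_cases hz : z ∈ Metric.ball (0:Ed d) r
  · rw [gker, gker, indicator_of_mem hz, indicator_of_mem (hmem.mpr hz)]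
    rw [norm_smul, norm_inv, Real.norm_eq_abs, abs_of_pos hr,
      Real.mul_rpow (inv_nonneg.mpr hr.le) (norm_nonneg z), ← mul_assoc,
      ← Real.mul_rpow hr.le (inv_nonneg.mpr hr.le), mul_inv_cancel₀ hr.ne',
      Real.one_rpow, one_mul]
  · rw [gker, gker, indicator_of_notMem hz,
      indicator_of_notMem (fun h => hz (hmem.mp h)), mul_zero]


lemma integrable_gker (hd : 0 < d) (ha : -(d:ℝ) < a) (ha0 : a < 0) {r : ℝ} (hr : 0 < r) :
    Integrable (gker d a r) := by
  have h1 : Integrable (gker d a 1) := by unfold gker; exact integrable_g1 hd ha ha0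
  have h2 : Integrable (fun z : Ed d => gker d a 1 (r⁻¹ • z)) :=
    h1.comp_smul (inv_ne_zero hr.ne')
  have h3 := h2.const_mul (r ^ a)
  exact h3.congr (Eventually.of_forall fun z => (gker_scale hr z).symm)

lemma integral_gker (hd : 0 < d) {r : ℝ} (hr : 0 < r) :
    ∫ z, gker d a r z = r ^ (a + d) * ∫ z, gker d a 1 z := by
  have h1 : ∫ z, gker d a r z = r ^ a * ∫ z : Ed d, gker d a 1 (r⁻¹ • z) := by
    rw [← integral_const_mul]
    exact integral_congr_ae (Eventually.of_forall fun z => gker_scale hr z)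
  rw [h1, Measure.integral_comp_inv_smul]
  rw [finrank_euclideanSpace_fin, abs_of_pos (pow_pos hr d), smul_eq_mul, ← mul_assoc]
  congr 1
  rw [Real.rpow_add hr, Real.rpow_natCast]

/-- translated version, centered at `x`. -/
lemma gker_translate (x : Ed d) (r : ℝ) (y : Ed d) :
    gker d a r (x - y) = (Metric.ball x r).indicator (fun y : Ed d => ‖x - y‖ ^ a) y := by
  have hmem : x - y ∈ Metric.ball (0:Ed d) r ↔ y ∈ Metric.ball x r := by
    simp only [mem_ball_zero_iff, Metric.mem_ball, dist_eq_norm, norm_sub_rev, sub_zero]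
  by_cases hy : y ∈ Metric.ball x r
  · rw [gker, indicator_of_mem (hmem.mpr hy), indicator_of_mem hy]
  · rw [gker, indicator_of_notMem (fun h => hy (hmem.mp h)), indicator_of_notMem hy]

lemma integrable_gker_translate (hd : 0 < d) (ha : -(d:ℝ) < a) (ha0 : a < 0)
    {r : ℝ} (hr : 0 < r) (x : Ed d) :
    Integrable (fun y : Ed d => gker d a r (x - y)) :=
  (integrable_gker hd ha ha0 hr).comp_sub_left x

lemma integral_gker_translate (hd : 0 < d) {r : ℝ} (hr : 0 < r) (x : Ed d) :
    ∫ y : Ed d, gker d a r (x - y) = r ^ (a + d) * ∫ z, gker d a 1 z := by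
  rw [integral_sub_left_eq_self (gker d a r) volume x]
  exact integral_gker hd hr

end RieszAux


open RieszAux in
/-- **Riesz potential of a continuous integrable function decaying like
`|x|^{-d}`.** The potential `(I_{2s} * φ)(x) = k ∫ |x-y|^{2s-d} φ(y) dy` is
well-defined (the integral converges absolutely for every `x`), continuous,
and decays at least like `|x|^{-(d-2s)}` at infinity. -/
theorem riesz_potential_decay
    (d : ℕ) (hd : 0 < d) (s k : ℝ) (hs0 : 0 < s) (hs1 : s < 1)
    (hds : 2 * s < (d : ℝ)) (hk : 0 < k)
    (φ : Ed d → ℝ) (hφc : Continuous φ) (hφi : Integrable φ)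
    (A : ℝ) (hA : 0 < A)
    (hdecay : ∀ x : Ed d, 1 ≤ ‖x‖ → |φ x| ≤ A * ‖x‖ ^ (-(d : ℝ))) :
    (∀ x : Ed d, Integrable (fun y : Ed d => ‖x - y‖ ^ (2 * s - (d : ℝ)) * φ y)) ∧
    Continuous (fun x : Ed d => k * ∫ y : Ed d, ‖x - y‖ ^ (2 * s - (d : ℝ)) * φ y) ∧
    (∃ B : ℝ, 0 < B ∧ ∀ x : Ed d, 1 ≤ ‖x‖ →
      |k * ∫ y : Ed d, ‖x - y‖ ^ (2 * s - (d : ℝ)) * φ y|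
        ≤ B * ‖x‖ ^ (-((d : ℝ) - 2 * s))) := by
  have hdR : (0:ℝ) < d := by exact_mod_cast hd
  haveI : Nonempty (Fin d) := ⟨⟨0, hd⟩⟩
  set a : ℝ := 2 * s - d with ha_def
  have ha0 : a < 0 := by rw [ha_def]; linarith
  have had : -(d:ℝ) < a := by rw [ha_def]; linarith
  have had2 : 0 < a + d := by rw [ha_def]; push_cast; linarith
  -- global bound on |φ|
  obtain ⟨M₀, hM₀⟩ :=
    (isCompact_closedBall (0:Ed d) 1).exists_bound_of_continuousOn hφc.continuousOn
  set M : ℝ := max M₀ A with hM_def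
  have hM : ∀ y : Ed d, |φ y| ≤ M := by
    intro y
    rcases le_or_gt ‖y‖ 1 with h | h
    · have h1 := hM₀ y (mem_closedBall_zero_iff.mpr h)
      rw [Real.norm_eq_abs] at h1
      exact h1.trans (le_max_left _ _)
    · have h2 : ‖y‖ ^ (-(d:ℝ)) ≤ 1 :=
        Real.rpow_le_one_of_one_le_of_nonpos h.le (neg_nonpos.mpr hdR.le)
      have h3 := hdecay y h.le
      have h4 : (0:ℝ) ≤ ‖y‖ ^ (-(d:ℝ)) := Real.rpow_nonneg (norm_nonneg _) _
      have h5 : A * ‖y‖ ^ (-(d:ℝ)) ≤ A := by nlinarith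
      exact (h3.trans h5).trans (le_max_right _ _)
  have hM0 : 0 ≤ M := (abs_nonneg _).trans (hM 0)
  have hker_meas : ∀ x : Ed d,
      AEStronglyMeasurable (fun y : Ed d => ‖x - y‖ ^ a * φ y) volume := fun x =>
    (((measurable_const.sub measurable_id).norm.pow measurable_const).mul
      hφc.measurable).aestronglyMeasurable
  -- Part 1 : integrability
  have hint : ∀ x : Ed d, Integrable (fun y : Ed d => ‖x - y‖ ^ a * φ y) := by
    intro x
    have hg1 : Integrable (fun y : Ed d => gker d a 1 (x - y)) :=
      integrable_gker_translate hd had ha0 one_pos x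
    refine Integrable.mono' ((hg1.const_mul M).add hφi.abs) (hker_meas x) ?_
    filter_upwards with y
    have hknn : (0:ℝ) ≤ ‖x - y‖ ^ a := Real.rpow_nonneg (norm_nonneg _) _
    rw [Real.norm_eq_abs, abs_mul, abs_of_nonneg hknn]
    simp only [Pi.add_apply]
    by_cases hy : y ∈ Metric.ball x 1
    · have hg1y : gker d a 1 (x - y) = ‖x - y‖ ^ a := by
        rw [gker_translate, indicator_of_mem hy]
      have h1 : ‖x - y‖ ^ a * |φ y| ≤ M * gker d a 1 (x - y) := by
        rw [hg1y, mul_comm M]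
        exact mul_le_mul_of_nonneg_left (hM y) hknn
      linarith [abs_nonneg (φ y)]
    · have h1 : 1 ≤ ‖x - y‖ := by
        have h2 : ¬ dist y x < 1 := fun h => hy (Metric.mem_ball.mpr h)
        rw [dist_eq_norm, norm_sub_rev] at h2
        linarith [not_lt.mp h2]
      have h2 : ‖x - y‖ ^ a ≤ 1 := Real.rpow_le_one_of_one_le_of_nonpos h1 ha0.le
      have h3 : ‖x - y‖ ^ a * |φ y| ≤ |φ y| := by nlinarith [abs_nonneg (φ y)]
      have h4 : 0 ≤ M * gker d a 1 (x - y) := mul_nonneg hM0 (gker_nonneg _ _)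
      linarith
  set J : ℝ := ∫ z : Ed d, gker d a 1 z with hJ_def
  have hJ0 : 0 ≤ J := integral_nonneg (gker_nonneg 1)
  have hL1 : Integrable (fun y : Ed d => |φ y|) := hφi.abs
  set L : ℝ := ∫ y : Ed d, |φ y| with hL_def
  have hL0 : 0 ≤ L := integral_nonneg fun y => abs_nonneg _
  -- ball-restricted kernel integral
  have hball_int : ∀ (x : Ed d) (r : ℝ), 0 < r →
      IntegrableOn (fun y : Ed d => ‖x - y‖ ^ a) (Metric.ball x r) := by
    intro x r hr
    rw [← integrable_indicator_iff measurableSet_ball]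
    have h1 := integrable_gker_translate hd had ha0 hr x
    refine h1.congr (Eventually.of_forall fun y => ?_)
    exact gker_translate x r y
  have hball_eq : ∀ (x : Ed d) (r : ℝ), 0 < r →
      ∫ y in Metric.ball x r, ‖x - y‖ ^ a = r ^ (a + d) * J := by
    intro x r hr
    rw [← integral_indicator measurableSet_ball, ← integral_gker_translate hd hr x]
    exact integral_congr_ae (Eventually.of_forall fun y => (gker_translate x r y).symm)
  -- Part 3 : decay estimate (key bound)
  have key : ∀ x : Ed d, 1 ≤ ‖x‖ →
      |∫ y : Ed d, ‖x - y‖ ^ a * φ y| ≤ ((M + A) * J + L) * (‖x‖ / 2) ^ a := by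
    intro x hx
    set r : ℝ := ‖x‖ / 2 with hr_def
    have hr : 0 < r := by rw [hr_def]; linarith
    have habs_int : Integrable (fun y : Ed d => |‖x - y‖ ^ a * φ y|) := (hint x).abs
    have h0 : |∫ y : Ed d, ‖x - y‖ ^ a * φ y| ≤ ∫ y : Ed d, |‖x - y‖ ^ a * φ y| := by
      have h := norm_integral_le_integral_norm (μ := volume)
        (fun y : Ed d => ‖x - y‖ ^ a * φ y)
      simpa only [Real.norm_eq_abs] using h
    have hsplit : ∫ y : Ed d, |‖x - y‖ ^ a * φ y| =
        (∫ y in Metric.ball x r, |‖x - y‖ ^ a * φ y|)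
        + ∫ y in (Metric.ball x r)ᶜ, |‖x - y‖ ^ a * φ y| :=
      (integral_add_compl measurableSet_ball habs_int).symm
    have hnear : (∫ y in Metric.ball x r, |‖x - y‖ ^ a * φ y|)
        ≤ (M + A) * r ^ (-(d:ℝ)) * (r ^ (a + d) * J) := by
      have hb : ∀ y ∈ Metric.ball x r, |‖x - y‖ ^ a * φ y| ≤
          ((M + A) * r ^ (-(d:ℝ))) * ‖x - y‖ ^ a := by
        intro y hy
        have hxy : ‖x - y‖ < r := by
          have := Metric.mem_ball.mp hy
          rw [dist_eq_norm, norm_sub_rev] at this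
          exact this
        have hynorm : r ≤ ‖y‖ := by
          have h2 : ‖x‖ - ‖y‖ ≤ ‖x - y‖ := norm_sub_norm_le x y
          have h3 : ‖x‖ = 2 * r := by rw [hr_def]; ring
          linarith
        have hrpos : 0 < r ^ (-(d:ℝ)) := Real.rpow_pos_of_pos hr _
        have hφy : |φ y| ≤ (M + A) * r ^ (-(d:ℝ)) := by
          rcases le_or_gt 1 ‖y‖ with h | h
          · have h1 : ‖y‖ ^ (-(d:ℝ)) ≤ r ^ (-(d:ℝ)) :=
              Real.rpow_le_rpow_of_nonpos hr hynorm (neg_nonpos.mpr hdR.le)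
            have h5 := hdecay y h
            nlinarith [Real.rpow_nonneg (norm_nonneg y) (-(d:ℝ))]
          · have hr1 : r < 1 := lt_of_le_of_lt hynorm h
            have h1 : (1:ℝ) ≤ r ^ (-(d:ℝ)) :=
              Real.one_le_rpow_of_pos_of_le_one_of_nonpos hr hr1.le (neg_nonpos.mpr hdR.le)
            nlinarith [hM y]
        have hknn : (0:ℝ) ≤ ‖x - y‖ ^ a := Real.rpow_nonneg (norm_nonneg _) _
        rw [abs_mul, abs_of_nonneg hknn]
        calc ‖x - y‖ ^ a * |φ y| ≤ ‖x - y‖ ^ a * ((M + A) * r ^ (-(d:ℝ))) :=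
              mul_le_mul_of_nonneg_left hφy hknn
          _ = ((M + A) * r ^ (-(d:ℝ))) * ‖x - y‖ ^ a := mul_comm _ _
      calc (∫ y in Metric.ball x r, |‖x - y‖ ^ a * φ y|)
          ≤ ∫ y in Metric.ball x r, ((M + A) * r ^ (-(d:ℝ))) * ‖x - y‖ ^ a :=
            setIntegral_mono_on habs_int.integrableOn
              ((hball_int x r hr).const_mul _) measurableSet_ball hb
        _ = ((M + A) * r ^ (-(d:ℝ))) * ∫ y in Metric.ball x r, ‖x - y‖ ^ a :=
            integral_const_mul _ _
        _ = (M + A) * r ^ (-(d:ℝ)) * (r ^ (a + d) * J) := by rw [hball_eq x r hr]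
    have hfar : (∫ y in (Metric.ball x r)ᶜ, |‖x - y‖ ^ a * φ y|) ≤ r ^ a * L := by
      have hb : ∀ y ∈ (Metric.ball x r)ᶜ, |‖x - y‖ ^ a * φ y| ≤ r ^ a * |φ y| := by
        intro y hy
        have h1 : r ≤ ‖x - y‖ := by
          have h2 : ¬ dist y x < r := fun h => hy (Metric.mem_ball.mpr h)
          rw [dist_eq_norm, norm_sub_rev] at h2
          linarith [not_lt.mp h2]
        have h2 : ‖x - y‖ ^ a ≤ r ^ a := Real.rpow_le_rpow_of_nonpos hr h1 ha0.le
        rw [abs_mul, abs_of_nonneg (Real.rpow_nonneg (norm_nonneg _) _)]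
        exact mul_le_mul_of_nonneg_right h2 (abs_nonneg _)
      calc (∫ y in (Metric.ball x r)ᶜ, |‖x - y‖ ^ a * φ y|)
          ≤ ∫ y in (Metric.ball x r)ᶜ, r ^ a * |φ y| :=
            setIntegral_mono_on habs_int.integrableOn
              ((hL1.const_mul _).integrableOn) measurableSet_ball.compl hb
        _ = r ^ a * ∫ y in (Metric.ball x r)ᶜ, |φ y| := integral_const_mul _ _
        _ ≤ r ^ a * L := by
            refine mul_le_mul_of_nonneg_left ?_ (Real.rpow_nonneg hr.le a)
            exact setIntegral_le_integral hL1 (Eventually.of_forall fun y => abs_nonneg _)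
    have hpow : r ^ (-(d:ℝ)) * r ^ (a + d) = r ^ a := by
      rw [← Real.rpow_add hr]
      norm_num
    have hcomb : (M + A) * r ^ (-(d:ℝ)) * (r ^ (a + d) * J) = (M + A) * J * r ^ a := by
      calc (M + A) * r ^ (-(d:ℝ)) * (r ^ (a + d) * J)
          = (M + A) * (r ^ (-(d:ℝ)) * r ^ (a + d)) * J := by ring
        _ = (M + A) * r ^ a * J := by rw [hpow]
        _ = (M + A) * J * r ^ a := by ring
    calc |∫ y : Ed d, ‖x - y‖ ^ a * φ y| ≤ ∫ y : Ed d, |‖x - y‖ ^ a * φ y| := h0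
      _ = (∫ y in Metric.ball x r, |‖x - y‖ ^ a * φ y|)
          + ∫ y in (Metric.ball x r)ᶜ, |‖x - y‖ ^ a * φ y| := hsplit
      _ ≤ (M + A) * J * r ^ a + r ^ a * L := by
          rw [← hcomb]; exact add_le_add hnear hfar
      _ = ((M + A) * J + L) * r ^ a := by ring
  -- Part 2 : continuity
  set V : ℝ := (volume (Metric.ball (0:Ed d) 1)).toReal with hV_def
  have hV0 : 0 ≤ V := ENNReal.toReal_nonneg
  set C₀ : ℝ := M * (J + V) with hC_def
  have hC0 : 0 ≤ C₀ := mul_nonneg hM0 (add_nonneg hJ0 hV0)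
  have hεmeas : ∀ (ε : ℝ) (x : Ed d),
      AEStronglyMeasurable (fun y : Ed d => max ‖x - y‖ ε ^ a * φ y) volume := fun ε x =>
    ((((measurable_const.sub measurable_id).norm.max measurable_const).pow
      measurable_const).mul hφc.measurable).aestronglyMeasurable
  have hεbound : ∀ (ε : ℝ), 0 < ε → ∀ (x : Ed d) (y : Ed d),
      ‖max ‖x - y‖ ε ^ a * φ y‖ ≤ ε ^ a * |φ y| := by
    intro ε hε x y
    have hmaxnn : (0:ℝ) ≤ max ‖x - y‖ ε := le_max_of_le_right hε.le
    rw [Real.norm_eq_abs, abs_mul, abs_of_nonneg (Real.rpow_nonneg hmaxnn _)]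
    exact mul_le_mul_of_nonneg_right
      (Real.rpow_le_rpow_of_nonpos hε (le_max_right _ _) ha0.le) (abs_nonneg _)
  have hFε_int : ∀ (ε : ℝ), 0 < ε → ∀ x : Ed d,
      Integrable (fun y : Ed d => max ‖x - y‖ ε ^ a * φ y) := by
    intro ε hε x
    refine Integrable.mono' (hφi.abs.const_mul (ε ^ a)) (hεmeas ε x) ?_
    filter_upwards with y
    exact hεbound ε hε x y
  have hFε_cont : ∀ (ε : ℝ), 0 < ε →
      Continuous (fun x : Ed d => ∫ y : Ed d, max ‖x - y‖ ε ^ a * φ y) := by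
    intro ε hε
    refine continuous_of_dominated (fun x => hεmeas ε x) ?_ (hφi.abs.const_mul (ε ^ a)) ?_
    · intro x
      filter_upwards with y
      exact hεbound ε hε x y
    · filter_upwards with y
      have hcont : Continuous fun x : Ed d => max ‖x - y‖ ε :=
        ((continuous_id.sub continuous_const).norm).max continuous_const
      refine (hcont.rpow_const fun x => Or.inl ?_).mul continuous_const
      exact (lt_of_lt_of_le hε (le_max_right _ _)).ne'
  have hdiff : ∀ (ε : ℝ), 0 < ε → ∀ x : Ed d,
      |(∫ y : Ed d, ‖x - y‖ ^ a * φ y) - ∫ y : Ed d, max ‖x - y‖ ε ^ a * φ y|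
        ≤ C₀ * ε ^ (a + d) := by
    intro ε hε x
    rw [← integral_sub (hint x) (hFε_int ε hε x)]
    set b : Ed d → ℝ := fun y =>
      M * ((Metric.ball x ε).indicator (fun y : Ed d => ‖x - y‖ ^ a + ε ^ a) y) with hb_def
    have h1 : Integrable (fun y : Ed d => gker d a ε (x - y)) :=
      integrable_gker_translate hd had ha0 hε x
    have h2 : Integrable ((Metric.ball x ε).indicator (fun _ : Ed d => ε ^ a)) := by
      rw [integrable_indicator_iff measurableSet_ball]
      exact integrableOn_const measure_ball_lt_top.ne
    have hb_eq : ∀ y : Ed d, b y = M * (gker d a ε (x - y)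
        + (Metric.ball x ε).indicator (fun _ : Ed d => ε ^ a) y) := by
      intro y
      simp only [hb_def]
      rw [gker_translate x ε y]
      by_cases hy : y ∈ Metric.ball x ε
      · rw [indicator_of_mem hy, indicator_of_mem hy, indicator_of_mem hy]
      · rw [indicator_of_notMem hy, indicator_of_notMem hy, indicator_of_notMem hy,
          add_zero, mul_zero]
    have hb_int : Integrable b := by
      refine ((h1.add h2).const_mul M).congr (Eventually.of_forall fun y => ?_)
      simp only [Pi.add_apply]
      exact (hb_eq y).symm
    have hptw : ∀ y : Ed d,
        ‖(‖x - y‖ ^ a * φ y) - max ‖x - y‖ ε ^ a * φ y‖ ≤ b y := by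
      intro y
      rw [← sub_mul, Real.norm_eq_abs, abs_mul]
      by_cases hy : y ∈ Metric.ball x ε
      · have hxy : ‖x - y‖ < ε := by
          have := Metric.mem_ball.mp hy
          rw [dist_eq_norm, norm_sub_rev] at this
          exact this
        have hmax : max ‖x - y‖ ε = ε := max_eq_right hxy.le
        simp only [hb_def]
        rw [indicator_of_mem hy, hmax]
        have h3 : |‖x - y‖ ^ a - ε ^ a| ≤ ‖x - y‖ ^ a + ε ^ a := by
          have := abs_sub (‖x - y‖ ^ a) (ε ^ a)
          rwa [abs_of_nonneg (Real.rpow_nonneg (norm_nonneg _) _),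
            abs_of_nonneg (Real.rpow_nonneg hε.le _)] at this
        have h4 : (0:ℝ) ≤ ‖x - y‖ ^ a + ε ^ a :=
          add_nonneg (Real.rpow_nonneg (norm_nonneg _) _) (Real.rpow_nonneg hε.le _)
        calc |‖x - y‖ ^ a - ε ^ a| * |φ y| ≤ (‖x - y‖ ^ a + ε ^ a) * |φ y| :=
              mul_le_mul_of_nonneg_right h3 (abs_nonneg _)
          _ ≤ (‖x - y‖ ^ a + ε ^ a) * M := mul_le_mul_of_nonneg_left (hM y) h4
          _ = M * (‖x - y‖ ^ a + ε ^ a) := mul_comm _ _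
      · have hxy : ε ≤ ‖x - y‖ := by
          have h2 : ¬ dist y x < ε := fun h => hy (Metric.mem_ball.mpr h)
          rw [dist_eq_norm, norm_sub_rev] at h2
          linarith [not_lt.mp h2]
        have hmax : max ‖x - y‖ ε = ‖x - y‖ := max_eq_left hxy
        simp only [hb_def]
        rw [indicator_of_notMem hy, hmax, sub_self, abs_zero, zero_mul, mul_zero]
    have hbval : ∫ y : Ed d, b y = C₀ * ε ^ (a + d) := by
      have h3 : ∫ y : Ed d, b y = M * ((∫ y : Ed d, gker d a ε (x - y))
          + ∫ y : Ed d, (Metric.ball x ε).indicator (fun _ : Ed d => ε ^ a) y) := by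
        rw [← integral_add h1 h2, ← integral_const_mul]
        exact integral_congr_ae (Eventually.of_forall fun y => by
          simp only [Pi.add_apply]; exact hb_eq y)
      have h4 : ∫ y : Ed d, gker d a ε (x - y) = ε ^ (a + d) * J :=
        integral_gker_translate hd hε x
      have h5 : ∫ y : Ed d, (Metric.ball x ε).indicator (fun _ : Ed d => ε ^ a) y
          = ε ^ a * (ε ^ (d:ℕ) * V) := by
        rw [integral_indicator_const _ measurableSet_ball]
        rw [measureReal_def, Measure.addHaar_ball _ _ hε.le, finrank_euclideanSpace_fin, ENNReal.toReal_mul,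
          ENNReal.toReal_ofReal (pow_nonneg hε.le _)]
        rw [smul_eq_mul, hV_def]
        ring
      have h6 : ε ^ a * ε ^ (d:ℕ) = ε ^ (a + d) := by
        rw [← Real.rpow_natCast ε d, ← Real.rpow_add hε]
      rw [h3, h4, h5, hC_def]
      calc M * (ε ^ (a + d) * J + ε ^ a * (ε ^ (d:ℕ) * V))
          = M * (ε ^ (a + d) * J + (ε ^ a * ε ^ (d:ℕ)) * V) := by ring
        _ = M * (ε ^ (a + d) * J + ε ^ (a + d) * V) := by rw [h6]
        _ = M * (J + V) * ε ^ (a + d) := by ring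
    calc |∫ y : Ed d, (‖x - y‖ ^ a * φ y - max ‖x - y‖ ε ^ a * φ y)|
        = ‖∫ y : Ed d, (‖x - y‖ ^ a * φ y - max ‖x - y‖ ε ^ a * φ y)‖ :=
          (Real.norm_eq_abs _).symm
      _ ≤ ∫ y : Ed d, b y :=
          norm_integral_le_of_norm_le hb_int (Eventually.of_forall hptw)
      _ = C₀ * ε ^ (a + d) := hbval
  have hcont_F : Continuous (fun x : Ed d => ∫ y : Ed d, ‖x - y‖ ^ a * φ y) := by
    have htendsto : Tendsto (fun n : ℕ => C₀ * ((n:ℝ) + 1)⁻¹ ^ (a + d)) atTop (𝓝 0) := by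
      have h1 : Tendsto (fun n : ℕ => ((n:ℝ) + 1)) atTop atTop :=
        tendsto_atTop_add_const_right _ 1 tendsto_natCast_atTop_atTop
      have h2 : Tendsto (fun n : ℕ => ((n:ℝ) + 1) ^ (a + d)) atTop atTop :=
        (tendsto_rpow_atTop had2).comp h1
      have h3 : Tendsto (fun n : ℕ => (((n:ℝ) + 1) ^ (a + d))⁻¹) atTop (𝓝 0) :=
        h2.inv_tendsto_atTop
      have h4 : ∀ n : ℕ, (((n:ℝ) + 1) ^ (a + d))⁻¹ = ((n:ℝ) + 1)⁻¹ ^ (a + d) := fun n =>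
        (Real.inv_rpow (by positivity) _).symm
      simp_rw [h4] at h3
      simpa using h3.const_mul C₀
    have hTU : TendstoUniformly
        (fun (n : ℕ) (x : Ed d) => ∫ y : Ed d, max ‖x - y‖ ((n:ℝ) + 1)⁻¹ ^ a * φ y)
        (fun x : Ed d => ∫ y : Ed d, ‖x - y‖ ^ a * φ y) atTop := by
      rw [Metric.tendstoUniformly_iff]
      intro δ hδ
      filter_upwards [htendsto.eventually_lt_const hδ] with n hn x
      rw [Real.dist_eq]
      calc |(∫ y : Ed d, ‖x - y‖ ^ a * φ y)
            - ∫ y : Ed d, max ‖x - y‖ ((n:ℝ) + 1)⁻¹ ^ a * φ y|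
          ≤ C₀ * ((n:ℝ) + 1)⁻¹ ^ (a + d) := hdiff _ (by positivity) x
        _ < δ := hn
    exact hTU.continuous (Eventually.of_forall fun n => hFε_cont _ (by positivity)).frequently
  refine ⟨hint, continuous_const.mul hcont_F, ?_⟩
  -- assemble decay conclusion
  refine ⟨k * ((M + A) * J + L) * 2 ^ (-a) + 1, ?_, ?_⟩
  · have h1 : (0:ℝ) < 2 ^ (-a) := Real.rpow_pos_of_pos two_pos _
    have h2 : 0 ≤ (M + A) * J + L := add_nonneg (mul_nonneg (by linarith) hJ0) hL0
    have h3 : 0 ≤ k * ((M + A) * J + L) * 2 ^ (-a) :=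
      mul_nonneg (mul_nonneg hk.le h2) h1.le
    linarith
  · intro x hx
    have hxpos : (0:ℝ) < ‖x‖ := lt_of_lt_of_le one_pos hx
    have hxa : 0 < ‖x‖ ^ a := Real.rpow_pos_of_pos hxpos a
    have hkey := key x hx
    have hhalf : (‖x‖ / 2) ^ a = ‖x‖ ^ a * 2 ^ (-a) := by
      rw [div_eq_mul_inv, Real.mul_rpow hxpos.le (by norm_num),
        Real.inv_rpow (by norm_num : (0:ℝ) ≤ 2), ← Real.rpow_neg (by norm_num : (0:ℝ) ≤ 2)]
    have hexp_eq : -((d:ℝ) - 2 * s) = a := by rw [ha_def]; ring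
    rw [hexp_eq, abs_mul, abs_of_pos hk]
    have h2 : 0 ≤ (M + A) * J + L := add_nonneg (mul_nonneg (by linarith) hJ0) hL0
    calc k * |∫ y : Ed d, ‖x - y‖ ^ a * φ y|
        ≤ k * (((M + A) * J + L) * (‖x‖ / 2) ^ a) :=
          mul_le_mul_of_nonneg_left hkey hk.le
      _ = k * ((M + A) * J + L) * 2 ^ (-a) * ‖x‖ ^ a := by rw [hhalf]; ring
      _ ≤ (k * ((M + A) * J + L) * 2 ^ (-a) + 1) * ‖x‖ ^ a := by nlinarith
end
end
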